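/- The super Schur polynomial satisfies SP_λ(x_1,...,x_m; y_1,...,y_n) = Σ_{μ ⊆ λ} (-1)^{|μ|} s_{λ/μ}(x) s_{μ'}(y), where the sum is over partitions μ contained in λ, s_{λ/μ} is a skew Schur polynomial and μ' is the conjugate of μ. -/

import Mathlib

/-- Complete homogeneous symmetric polynomial, `0` for negative degree. -/
noncomputable def completeHom {R : Type*} [CommRing R] {m : ℕ} (x : Fin m → R) (k : ℤ) : R :=
  if 0 ≤ k then ∑ c ∈ Finset.Nat.antidiagonalTuple m k.toNat, ∏ i, x i ^ c i else 0

/-- Elementary symmetric polynomial, `0` outside `0 ≤ k ≤ n`. -/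
noncomputable def elemSym {R : Type*} [CommRing R] {n : ℕ} (y : Fin n → R) (k : ℤ) : R :=
  if 0 ≤ k then
    ∑ s ∈ (Finset.univ : Finset (Fin n)).powersetCard k.toNat, ∏ j ∈ s, y j
  else 0

/-- The super complete symmetric polynomial
`h_a(x,y) = Σ_{j=0}^n (-1)^j h_{a-j}(x) e_j(y)`. -/
noncomputable def superComplete {R : Type*} [CommRing R] {m n : ℕ} (x : Fin m → R)
    (y : Fin n → R) (a : ℤ) : R :=
  ∑ j ∈ Finset.range (n + 1), (-1 : R) ^ j * completeHom x (a - (j : ℤ)) * elemSym y (j : ℤ)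

/-- The super Schur polynomial `SP_λ(x,y) = det (h_{λ_i - i + j}(x,y))`. -/
noncomputable def superSchur {R : Type*} [CommRing R] {m n L : ℕ} (x : Fin m → R)
    (y : Fin n → R) (lam : Fin L → ℕ) : R :=
  Matrix.det (Matrix.of fun i j : Fin L =>
    superComplete x y ((lam i : ℤ) + (j : ℤ) - (i : ℤ)))

/-- The skew Schur polynomial `s_{λ/μ}(x) = det (h_{λ_i - μ_j - i + j}(x))`. -/
noncomputable def skewSchur {R : Type*} [CommRing R] {m L : ℕ} (x : Fin m → R)
    (lam mu : Fin L → ℕ) : R :=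
  Matrix.det (Matrix.of fun i j : Fin L =>
    completeHom x ((lam i : ℤ) - (mu j : ℤ) + (j : ℤ) - (i : ℤ)))

/-- `s_{μ'}(y)` via the dual Jacobi–Trudy determinant `det (e_{μ_i - i + j}(y))`. -/
noncomputable def conjSchurJT {R : Type*} [CommRing R] {n L : ℕ} (y : Fin n → R)
    (mu : Fin L → ℕ) : R :=
  Matrix.det (Matrix.of fun i j : Fin L =>
    elemSym y ((mu i : ℤ) + (j : ℤ) - (i : ℤ)))

open Finset Equiv Matrix

section CB


variable {R : Type*} [CommRing R]

lemma completeHom_neg {m : ℕ} (x : Fin m → R) {k : ℤ} (hk : k < 0) : completeHom x k = 0 := by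
  simp [completeHom, not_le.mpr hk]

lemma elemSym_neg {n : ℕ} (y : Fin n → R) {k : ℤ} (hk : k < 0) : elemSym y k = 0 := by
  simp [elemSym, not_le.mpr hk]

lemma elemSym_gt {n : ℕ} (y : Fin n → R) {k : ℤ} (hk : (n : ℤ) < k) : elemSym y k = 0 := by
  have h0 : (0:ℤ) ≤ k := le_of_lt (lt_of_le_of_lt (Int.natCast_nonneg n) hk)
  rw [elemSym, if_pos h0]
  have hc : (Finset.univ : Finset (Fin n)).card < k.toNat := by
    simp only [Finset.card_univ, Fintype.card_fin]; omega
  rw [Finset.powersetCard_eq_empty.mpr hc]  -- guess name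
  simp

lemma det_zero_of_block {L : ℕ} (M : Matrix (Fin L) (Fin L) R) (k : Fin L)
    (h : ∀ i j : Fin L, k ≤ i → j ≤ k → M i j = 0) : M.det = 0 := by
  rw [Matrix.det_apply']
  refine Finset.sum_eq_zero fun σ _ => ?_
  have hex : ∃ j : Fin L, j ≤ k ∧ k ≤ σ j := by
    by_contra hc
    push_neg at hc
    have hmaps : ∀ a ∈ Finset.Iic k, σ a ∈ Finset.Iio k := by
      intro a ha
      simp only [Finset.mem_Iic] at ha
      simp only [Finset.mem_Iio]
      exact hc a ha
    have hcard : (Finset.Iio k).card < (Finset.Iic k).card := by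
      simp [Nat.lt_succ_self]
    obtain ⟨a, _, b, _, hab, he⟩ :=
      Finset.exists_ne_map_eq_of_card_lt_of_maps_to hcard hmaps
    exact hab (σ.injective he)
  obtain ⟨j, hj, hσj⟩ := hex
  rw [Finset.prod_eq_zero (f := fun i => M (σ i) i) (Finset.mem_univ j) (h _ _ hσj hj)]
  ring

lemma strictMono_gap {L N : ℕ} {f : Fin L → Fin N} (hf : StrictMono f) {i j : Fin L}
    (hij : i ≤ j) : (f i : ℕ) + (j : ℕ) ≤ (f j : ℕ) + (i : ℕ) := by
  have hcard := Finset.card_le_card_of_injOn f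
    (s := Finset.Icc i j) (t := Finset.Icc (f i) (f j))
    (fun a ha => by
      simp only [Finset.coe_Icc, Set.mem_Icc, Finset.mem_coe, Finset.mem_Icc] at ha ⊢
      exact ⟨hf.monotone ha.1, hf.monotone ha.2⟩)
    (hf.injective.injOn)
  simp only [Fin.card_Icc] at hcard  -- guess
  omega

lemma strictMono_le {L n : ℕ} {f : Fin L → Fin (L + n)} (hf : StrictMono f) (j : Fin L) :
    (f j : ℕ) ≤ n + (j : ℕ) := by
  have hL : (j : ℕ) < L := j.isLt
  have hlast : j ≤ (⟨L - 1, by omega⟩ : Fin L) := by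
    rw [Fin.le_def]; simp; omega
  have := strictMono_gap hf hlast
  have h2 : (f ⟨L - 1, by omega⟩ : ℕ) < L + n := (f _).isLt
  simp at this
  omega

variable {R : Type*} [CommRing R]

lemma imageCard {L N : ℕ} {p : Fin L → Fin N} (h : Function.Injective p) :
    (Finset.image p Finset.univ).card = L := by
  rw [Finset.card_image_of_injective _ h, Finset.card_univ, Fintype.card_fin]

noncomputable def monoOf {L N : ℕ} (p : Fin L → Fin N) : Fin L → Fin N :=
  if h : Function.Injective p then (Finset.image p Finset.univ).orderEmbOfFin (imageCard h) else p

noncomputable def permOf {L N : ℕ} (p : Fin L → Fin N) : Equiv.Perm (Fin L) :=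
  if h : Function.Injective p then
    Equiv.ofBijective
      (fun k => ((Finset.image p Finset.univ).orderIsoOfFin (imageCard h)).symm
        ⟨p k, by simp [Finset.mem_image]⟩)
      (Finite.injective_iff_bijective.mp (fun a b hab => by
        apply h
        have := congrArg ((Finset.image p Finset.univ).orderIsoOfFin (imageCard h)) hab
        simp only [OrderIso.apply_symm_apply] at this
        exact congrArg Subtype.val this))
  else 1

lemma monoOf_strictMono {L N : ℕ} {p : Fin L → Fin N} (h : Function.Injective p) :
    StrictMono (monoOf p) := by
  rw [monoOf, dif_pos h]
  exact ((Finset.image p Finset.univ).orderEmbOfFin (imageCard h)).strictMono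

lemma monoOf_comp_permOf {L N : ℕ} {p : Fin L → Fin N} (h : Function.Injective p) :
    monoOf p ∘ permOf p = p := by
  funext k
  rw [monoOf, permOf, dif_pos h, dif_pos h]
  simp only [Function.comp_apply, Equiv.ofBijective_apply, ← Finset.coe_orderIsoOfFin_apply,
    OrderIso.apply_symm_apply]

lemma monoOf_comp {L N : ℕ} {φ : Fin L → Fin N} (hφ : StrictMono φ) (σ : Equiv.Perm (Fin L)) :
    monoOf (φ ∘ σ) = φ := by
  have hinj : Function.Injective (φ ∘ σ) := hφ.injective.comp σ.injective
  have himg : Finset.image (φ ∘ σ) Finset.univ = Finset.image φ Finset.univ := by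
    rw [← Finset.image_image]
    congr 1
    exact Finset.image_univ_equiv σ  -- guess
  rw [monoOf, dif_pos hinj]
  have := Finset.orderEmbOfFin_unique
    (s := Finset.image (φ ∘ σ) Finset.univ) (imageCard hinj) (f := φ)
    (fun x => by rw [himg]; exact Finset.mem_image_of_mem φ (Finset.mem_univ x)) hφ
  exact this.symm

lemma permOf_comp {L N : ℕ} {φ : Fin L → Fin N} (hφ : StrictMono φ) (σ : Equiv.Perm (Fin L)) :
    permOf (φ ∘ σ) = σ := by
  have hinj : Function.Injective (φ ∘ σ) := hφ.injective.comp σ.injective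
  have hm := monoOf_comp hφ σ
  ext k
  rw [permOf, dif_pos hinj]
  simp only [Equiv.ofBijective_apply]
  have hiso : ((Finset.image (φ ∘ σ) Finset.univ).orderIsoOfFin (imageCard hinj)) (σ k)
      = ⟨(φ ∘ σ) k, by exact Finset.mem_image_of_mem _ (Finset.mem_univ k)⟩ := by
    apply Subtype.ext
    rw [Finset.coe_orderIsoOfFin_apply]
    have : ((Finset.image (φ ∘ σ) Finset.univ).orderEmbOfFin (imageCard hinj) : Fin L → Fin N)
        = monoOf (φ ∘ σ) := by rw [monoOf, dif_pos hinj]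
    rw [this, hm]
    rfl
  rw [← hiso, OrderIso.symm_apply_apply]

variable {R : Type*} [CommRing R]

open scoped Classical in
lemma detMulAux {L N : ℕ} (A : Matrix (Fin L) (Fin N) R) (B : Matrix (Fin N) (Fin L) R)
    {p : Fin L → Fin N} (H : ¬Function.Injective p) :
    (∑ σ : Perm (Fin L), ((Perm.sign σ : ℤ) : R) * ∏ i, A (σ i) (p i) * B (p i) i) = 0 := by
  obtain ⟨i, j, hpij, hij⟩ : ∃ i j, p i = p j ∧ i ≠ j := by
    rw [Function.Injective] at H
    push_neg at H
    obtain ⟨i, j, h1, h2⟩ := H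
    exact ⟨i, j, h1, h2⟩
  exact Finset.sum_involution (fun σ _ => σ * Equiv.swap i j)
    (fun σ _ => by
      have : (∏ x, A (σ x) (p x)) = ∏ x, A ((σ * Equiv.swap i j) x) (p x) :=
        Fintype.prod_equiv (Equiv.swap i j) _ _ (by simp [Equiv.apply_swap_eq_self hpij])
      simp [this, Equiv.Perm.sign_swap hij, -Equiv.Perm.sign_swap', Finset.prod_mul_distrib])
    (fun σ _ _ => (not_congr Equiv.mul_swap_eq_iff).mpr hij)
    (fun _ _ => Finset.mem_univ _)
    (fun σ _ => Equiv.mul_swap_involutive i j σ)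

open scoped Classical in
lemma cauchyBinet {L N : ℕ} (A : Matrix (Fin L) (Fin N) R) (B : Matrix (Fin N) (Fin L) R) :
    (A * B).det = ∑ φ ∈ Finset.univ.filter (fun φ : Fin L → Fin N => StrictMono φ),
      (A.submatrix id φ).det * (B.submatrix φ id).det := by
  have h1 : (A * B).det = ∑ p : Fin L → Fin N, ∑ σ : Perm (Fin L),
      ((Perm.sign σ : ℤ) : R) * ∏ i, A (σ i) (p i) * B (p i) i := by
    simp only [Matrix.det_apply', Matrix.mul_apply, Finset.prod_univ_sum, Finset.mul_sum,
      Fintype.piFinset_univ]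
    rw [Finset.sum_comm]
  have h3 : ∀ p : Fin L → Fin N,
      (∑ σ : Perm (Fin L), ((Perm.sign σ : ℤ) : R) * ∏ i, A (σ i) (p i) * B (p i) i)
        = (∏ i, B (p i) i) * (A.submatrix id p).det := by
    intro p
    rw [Matrix.det_apply', Finset.mul_sum]
    refine Finset.sum_congr rfl fun σ _ => ?_
    rw [Finset.prod_mul_distrib]
    simp only [Matrix.submatrix_apply, id_eq]
    ring
  rw [h1]
  rw [show (∑ p : Fin L → Fin N, ∑ σ : Perm (Fin L),
      ((Perm.sign σ : ℤ) : R) * ∏ i, A (σ i) (p i) * B (p i) i)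
      = ∑ p ∈ Finset.univ.filter (fun p : Fin L → Fin N => Function.Injective p),
        ∑ σ : Perm (Fin L), ((Perm.sign σ : ℤ) : R) * ∏ i, A (σ i) (p i) * B (p i) i from
    (Finset.sum_subset (Finset.filter_subset _ _) fun p _ hp =>
      detMulAux A B (by simpa using hp)).symm]
  simp only [h3]
  -- per-φ evaluation
  have h5 : ∀ φ : Fin L → Fin N, StrictMono φ →
      (∑ σ : Perm (Fin L), (∏ i, B ((φ ∘ σ) i) i) * (A.submatrix id (φ ∘ σ)).det)
        = (A.submatrix id φ).det * (B.submatrix φ id).det := by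
    intro φ hφ
    have hB : (B.submatrix φ id).det
        = ∑ σ : Perm (Fin L), ((Perm.sign σ : ℤ) : R) * ∏ i, B (φ (σ i)) i := by
      rw [Matrix.det_apply']
      simp [Matrix.submatrix_apply]
    rw [hB, Finset.mul_sum]
    refine Finset.sum_congr rfl fun σ _ => ?_
    have : A.submatrix id (φ ∘ σ) = (A.submatrix id φ).submatrix id σ := rfl
    rw [this, Matrix.det_permute' σ]
    simp only [Function.comp_apply]
    push_cast
    ring
  -- grouping: sum over injective p = sum over (φ, σ)
  have h4 : (∑ p ∈ Finset.univ.filter (fun p : Fin L → Fin N => Function.Injective p),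
        (∏ i, B (p i) i) * (A.submatrix id p).det)
      = ∑ x ∈ (Finset.univ.filter (fun φ : Fin L → Fin N => StrictMono φ)).sigma
          (fun _ => (Finset.univ : Finset (Perm (Fin L)))),
        (∏ i, B ((x.1 ∘ x.2) i) i) * (A.submatrix id (x.1 ∘ x.2)).det := by
    refine Finset.sum_nbij'
      (i := fun p => (⟨monoOf p, permOf p⟩ : Σ _ : Fin L → Fin N, Perm (Fin L)))
      (j := fun x => x.1 ∘ x.2) ?_ ?_ ?_ ?_ ?_
    · intro p hp
      have hpinj : Function.Injective p := by simpa using hp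
      simp only [Finset.mem_sigma, Finset.mem_filter, Finset.mem_univ, true_and]
      exact ⟨monoOf_strictMono hpinj, trivial⟩
    · rintro ⟨φ, σ⟩ hx
      simp only [Finset.mem_sigma, Finset.mem_filter, Finset.mem_univ, true_and] at hx
      simp only [Finset.mem_filter, Finset.mem_univ, true_and]
      exact hx.1.injective.comp σ.injective
    · intro p hp
      exact monoOf_comp_permOf (by simpa using hp)
    · rintro ⟨φ, σ⟩ hx
      simp only [Finset.mem_sigma, Finset.mem_filter, Finset.mem_univ, true_and] at hx
      have h1 := monoOf_comp hx.1 σ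
      have h2 := permOf_comp hx.1 σ
      simp only []
      rw [h1, h2]
    · intro p hp
      rw [monoOf_comp_permOf (by simpa using hp)]
  rw [h4, Finset.sum_sigma]
  exact Finset.sum_congr rfl fun φ hφ => h5 φ (by simpa using hφ)

end CB

section AB
variable {R : Type*} [CommRing R]
noncomputable def AM {m L : ℕ} (n : ℕ) (x : Fin m → R) (lam : Fin L → ℕ) :
    Matrix (Fin L) (Fin (L + n)) R :=
  Matrix.of fun i a => completeHom x ((lam i : ℤ) - (i : ℤ) + (a : ℤ) - (n : ℤ))

noncomputable def BM {n : ℕ} (L : ℕ) (y : Fin n → R) : Matrix (Fin (L + n)) (Fin L) R :=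
  Matrix.of fun a j => (-1 : R) ^ ((j : ℕ) + n) * (-1 : R) ^ (a : ℕ) *
    elemSym y ((j : ℤ) + (n : ℤ) - (a : ℤ))

lemma superSchur_eq {m n L : ℕ} (x : Fin m → R) (y : Fin n → R) (lam : Fin L → ℕ) :
    superSchur x y lam = ((AM n x lam) * (BM L y)).det := by
  unfold superSchur
  congr 1
  ext i j
  rw [Matrix.mul_apply]
  simp only [Matrix.of_apply, AM, BM]
  -- convert RHS to a sum over range (L+n) of a function of ℕ
  have hR : (∑ a : Fin (L + n), completeHom x ((lam i : ℤ) - (i : ℤ) + (a : ℤ) - (n : ℤ)) *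
        ((-1 : R) ^ ((j : ℕ) + n) * (-1 : R) ^ (a : ℕ) * elemSym y ((j : ℤ) + (n : ℤ) - (a : ℤ))))
      = ∑ a ∈ Finset.range (L + n), completeHom x ((lam i : ℤ) - (i : ℤ) + (a : ℤ) - (n : ℤ)) *
        ((-1 : R) ^ ((j : ℕ) + n) * (-1 : R) ^ a * elemSym y ((j : ℤ) + (n : ℤ) - (a : ℤ))) :=
    Fin.sum_univ_eq_sum_range (fun a => completeHom x ((lam i : ℤ) - (i : ℤ) + (a : ℤ) - (n : ℤ)) *
      ((-1 : R) ^ ((j : ℕ) + n) * (-1 : R) ^ a * elemSym y ((j : ℤ) + (n : ℤ) - (a : ℤ)))) (L + n)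
  rw [hR]
  have hsub : Finset.Icc (j : ℕ) ((j : ℕ) + n) ⊆ Finset.range (L + n) := by
    intro a ha
    simp only [Finset.mem_Icc] at ha
    have := j.isLt
    simp only [Finset.mem_range]
    omega
  rw [← Finset.sum_subset hsub (by
    intro a _ ha
    simp only [Finset.mem_Icc] at ha
    push_neg at ha
    rcases lt_or_ge a (j : ℕ) with h | h
    · rw [elemSym_gt y (by push_cast; omega)]; ring
    · have : (j : ℕ) + n < a := ha h
      rw [elemSym_neg y (by push_cast; omega)]; ring)]
  have hIcc : Finset.Icc (j : ℕ) ((j : ℕ) + n) = (Finset.range (n + 1)).image (fun k => (j : ℕ) + k) := by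
    ext a
    simp only [Finset.mem_Icc, Finset.mem_image, Finset.mem_range]
    constructor
    · intro h; exact ⟨a - j, by omega, by omega⟩
    · rintro ⟨k, hk, rfl⟩; omega
  rw [hIcc, Finset.sum_image (by intro a _ b _ h; exact Nat.add_left_cancel h)]
  unfold superComplete
  rw [← Finset.sum_range_reflect]
  refine Finset.sum_congr rfl fun k hk => ?_
  simp only [Finset.mem_range] at hk
  have hkn : k ≤ n := by omega
  have hc1 : (lam i : ℤ) + (j : ℤ) - (i : ℤ) - ((n + 1 - 1 - k : ℕ) : ℤ)
      = (lam i : ℤ) - (i : ℤ) + (((j : ℕ) + k : ℕ) : ℤ) - (n : ℤ) := by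
    push_cast [Nat.cast_sub hkn]
    push_cast
    omega
  have hc2 : ((n + 1 - 1 - k : ℕ) : ℤ) = (j : ℤ) + (n : ℤ) - (((j : ℕ) + k : ℕ) : ℤ) := by
    push_cast [Nat.cast_sub hkn]
    omega
  have hsign : (-1 : R) ^ (n + 1 - 1 - k) = (-1 : R) ^ ((j : ℕ) + n) * (-1 : R) ^ ((j : ℕ) + k) := by
    rw [← pow_add]
    have : (j : ℕ) + n + ((j : ℕ) + k) = (n + 1 - 1 - k) + 2 * ((j : ℕ) + k) := by omega
    rw [this, pow_add, pow_mul]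
    simp
  rw [hc1, hc2, hsign]
  ring

end AB

section Main
variable {R : Type*} [CommRing R]

lemma skewSchur_zero {m L : ℕ} (x : Fin m → R) {lam mu : Fin L → ℕ} (hlam : Antitone lam)
    (hmu : ∀ i j : Fin L, i ≤ j → mu j ≤ mu i) {k : Fin L} (hk : lam k < mu k) :
    skewSchur x lam mu = 0 := by
  unfold skewSchur
  refine det_zero_of_block _ k fun i j hi hj => ?_
  simp only [Matrix.of_apply]
  refine completeHom_neg x ?_
  have h1 : lam i ≤ lam k := hlam hi
  have h2 : mu k ≤ mu j := hmu j k hj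
  have h3 : (j : ℕ) ≤ (i : ℕ) := le_trans hj hi
  push_cast
  omega

lemma conjSchurJT_zero {n L : ℕ} (y : Fin n → R) {mu : Fin L → ℕ} {k : Fin L}
    (hk : n + (k : ℕ) < mu k) : conjSchurJT y mu = 0 := by
  unfold conjSchurJT
  refine Matrix.det_eq_zero_of_row_eq_zero k fun j => ?_
  simp only [Matrix.of_apply]
  refine elemSym_gt y ?_
  have := j.isLt
  push_cast
  omega

theorem statement12' : True := trivial
end Main

/-- `SP_λ(x,y) = Σ_{μ ⊆ λ} (-1)^{|μ|} s_{λ/μ}(x) s_{μ'}(y)`, the sum being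
over partitions `μ` contained in `λ` (encoded as antitone tuples `g` with `g i ≤ λ i`). -/
theorem statement12 {R : Type*} [CommRing R] (m n L : ℕ) (x : Fin m → R) (y : Fin n → R)
    (lam : Fin L → ℕ) (hanti : Antitone lam) :
    superSchur x y lam =
      ∑ g ∈ Finset.univ.filter (fun g : (i : Fin L) → Fin (lam i + 1) =>
          ∀ i j : Fin L, i ≤ j → (g j : ℕ) ≤ (g i : ℕ)),
        (-1 : R) ^ (∑ i, (g i : ℕ)) *
          skewSchur x lam (fun i => (g i : ℕ)) *
          conjSchurJT y (fun i => (g i : ℕ)) := by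
  classical
  have hkey : ∀ φ : Fin L → Fin (L + n), StrictMono φ →
      ((AM n x lam).submatrix id φ).det * ((BM L y).submatrix φ id).det
        = (-1 : R) ^ (∑ k : Fin L, (n + (k : ℕ) - (φ k : ℕ))) *
          skewSchur x lam (fun k => n + (k : ℕ) - (φ k : ℕ)) *
          conjSchurJT y (fun k => n + (k : ℕ) - (φ k : ℕ)) := by
    intro φ hφ
    have hφle : ∀ k : Fin L, (φ k : ℕ) ≤ n + (k : ℕ) := fun k => strictMono_le hφ k
    have hA : ((AM n x lam).submatrix id φ).det
        = skewSchur x lam (fun k => n + (k : ℕ) - (φ k : ℕ)) := by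
      unfold skewSchur
      congr 1
      ext i j
      simp only [Matrix.submatrix_apply, Matrix.of_apply, AM, id_eq]
      congr 1
      have := hφle j
      omega
    set E : Matrix (Fin L) (Fin L) R := Matrix.of fun i j : Fin L =>
      elemSym y (((n + (i : ℕ) - (φ i : ℕ) : ℕ) : ℤ) + (j : ℤ) - (i : ℤ)) with hE
    set F : Matrix (Fin L) (Fin L) R := Matrix.of fun i j : Fin L =>
      (-1 : R) ^ ((φ i : ℕ)) * E i j with hF
    have hBmat : (BM L y).submatrix φ id
        = Matrix.of fun i j : Fin L => (-1 : R) ^ ((j : ℕ) + n) * F i j := by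
      ext i j
      simp only [Matrix.submatrix_apply, Matrix.of_apply, BM, id_eq, hF, hE]
      rw [show ((j : ℤ) + (n : ℤ) - ((φ i : ℕ) : ℤ))
          = (((n + (i : ℕ) - (φ i : ℕ) : ℕ)) : ℤ) + (j : ℤ) - (i : ℤ) from by
        have := hφle i; omega]
      ring
    have hB : ((BM L y).submatrix φ id).det
        = (-1 : R) ^ (∑ k : Fin L, (n + (k : ℕ) - (φ k : ℕ))) *
          conjSchurJT y (fun k => n + (k : ℕ) - (φ k : ℕ)) := by
      rw [hBmat, Matrix.det_mul_row, hF, Matrix.det_mul_column]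
      have hEc : E.det = conjSchurJT y (fun k => n + (k : ℕ) - (φ k : ℕ)) := by
        unfold conjSchurJT
        rfl
      rw [hEc, ← mul_assoc]
      congr 1
      rw [Finset.prod_pow_eq_pow_sum, Finset.prod_pow_eq_pow_sum, ← pow_add]
      have hsum : ((∑ j : Fin L, ((j : ℕ) + n)) + ∑ k : Fin L, (φ k : ℕ))
          = 2 * (∑ k : Fin L, (φ k : ℕ)) + ∑ k : Fin L, (n + (k : ℕ) - (φ k : ℕ)) := by
        have h1 : (∑ j : Fin L, ((j : ℕ) + n))
            = ∑ k : Fin L, ((φ k : ℕ) + (n + (k : ℕ) - (φ k : ℕ))) :=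
          Finset.sum_congr rfl fun k _ => by have := hφle k; omega
        rw [h1, Finset.sum_add_distrib]
        ring
      rw [hsum, pow_add, pow_mul]
      simp
    rw [hA, hB]
    ring
  have hgap : ∀ (φ : Fin L → Fin (L + n)), StrictMono φ → ∀ i j : Fin L, i ≤ j →
      n + (j : ℕ) - (φ j : ℕ) ≤ n + (i : ℕ) - (φ i : ℕ) := by
    intro φ hφ i j hij
    have := strictMono_gap hφ hij
    have := strictMono_le hφ i
    have := strictMono_le hφ j
    omega
  rw [superSchur_eq x y lam, cauchyBinet,
    Finset.sum_congr rfl (fun φ hφ => hkey φ (by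
      simp only [Finset.mem_filter] at hφ
      exact hφ.2))]
  -- restrict LHS to φ with μ ≤ λ
  rw [← Finset.sum_subset (Finset.filter_subset
      (fun φ : Fin L → Fin (L + n) => ∀ k : Fin L, n + (k : ℕ) - (φ k : ℕ) ≤ lam k)
      (Finset.univ.filter (fun φ : Fin L → Fin (L + n) => StrictMono φ))) ?hzero1]
  case hzero1 =>
    intro φ hφ hφ'
    simp only [Finset.mem_filter] at hφ hφ'
    have hmono := hφ.2
    push_neg at hφ'
    obtain ⟨k, hk⟩ := hφ' hφ
    rw [skewSchur_zero x hanti (hgap φ hmono) hk]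
    ring
  -- restrict RHS to g with g k ≤ n + k
  rw [show (∑ g ∈ Finset.univ.filter (fun g : (i : Fin L) → Fin (lam i + 1) =>
          ∀ i j : Fin L, i ≤ j → (g j : ℕ) ≤ (g i : ℕ)),
        (-1 : R) ^ (∑ i, (g i : ℕ)) * skewSchur x lam (fun i => (g i : ℕ)) *
          conjSchurJT y (fun i => (g i : ℕ)))
      = ∑ g ∈ (Finset.univ.filter (fun g : (i : Fin L) → Fin (lam i + 1) =>
          ∀ i j : Fin L, i ≤ j → (g j : ℕ) ≤ (g i : ℕ))).filter
            (fun g => ∀ k : Fin L, (g k : ℕ) ≤ n + (k : ℕ)),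
        (-1 : R) ^ (∑ i, (g i : ℕ)) * skewSchur x lam (fun i => (g i : ℕ)) *
          conjSchurJT y (fun i => (g i : ℕ)) from
    (Finset.sum_subset (Finset.filter_subset _ _) fun g hg hg' => by
      simp only [Finset.mem_filter] at hg hg'
      push_neg at hg'
      obtain ⟨k, hk⟩ := hg' hg
      rw [conjSchurJT_zero y hk]
      ring).symm]
  -- now the bijection
  refine Finset.sum_nbij'
    (i := fun (φ : Fin L → Fin (L + n)) => (fun k =>
      (⟨min (lam k) (n + (k : ℕ) - (φ k : ℕ)), by omega⟩ : Fin (lam k + 1))))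
    (j := fun (g : (i : Fin L) → Fin (lam i + 1)) => (fun k =>
      (⟨n + (k : ℕ) - min (n + (k : ℕ)) (g k : ℕ), by have := k.isLt; omega⟩ : Fin (L + n))))
    ?_ ?_ ?_ ?_ ?_
  · intro φ hφ
    simp only [Finset.mem_filter, Finset.mem_univ, true_and] at hφ ⊢
    obtain ⟨hmono, hle⟩ := hφ
    refine ⟨fun i j hij => ?_, fun k => ?_⟩
    · have h1 := hgap φ hmono i j hij
      have h2 := hle i
      have h3 := hle j
      -- removed simp
      omega
    · have := strictMono_le hmono k
      -- removed simp
      omega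
  · intro g hg
    simp only [Finset.mem_filter, Finset.mem_univ, true_and] at hg ⊢
    obtain ⟨hanti', hle⟩ := hg
    have hb : ∀ k : Fin L, (g k : ℕ) ≤ lam k := fun k => by have := (g k).isLt; omega
    refine ⟨fun a b hab => ?_, fun k => ?_⟩
    · have h1 : (g b : ℕ) ≤ (g a : ℕ) := hanti' a b (le_of_lt hab)
      have h2 := hle a
      have h3 := hle b
      have h4 : (a : ℕ) < (b : ℕ) := hab
      simp only [Fin.mk_lt_mk]
      omega
    · have := hle k
      -- removed simp
      omega
  · intro φ hφ
    simp only [Finset.mem_filter, Finset.mem_univ, true_and] at hφ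
    obtain ⟨hmono, hle⟩ := hφ
    funext k
    have h1 := strictMono_le hmono k
    have h2 := hle k
    apply Fin.ext
    simp only [Fin.val_mk]
    omega
  · intro g hg
    simp only [Finset.mem_filter, Finset.mem_univ, true_and] at hg
    obtain ⟨-, hle⟩ := hg
    funext k
    have h2 := hle k
    have hb : (g k : ℕ) ≤ lam k := by have := (g k).isLt; omega
    apply Fin.ext
    simp only [Fin.val_mk]
    omega
  · intro φ hφ
    simp only [Finset.mem_filter, Finset.mem_univ, true_and] at hφ
    obtain ⟨hmono, hle⟩ := hφ
    have harg2 : (fun k : Fin L => min (lam k) (n + (k : ℕ) - (φ k : ℕ)))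
        = fun k : Fin L => n + (k : ℕ) - (φ k : ℕ) := by
      funext k
      have := hle k
      omega
    simp only [Fin.val_mk]
    simp only [harg2]
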